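/- Fix β > 0, an integer N ≥ 2, and exponent vectors η^a ∈ ℕ^N, η^b ∈ ℕ^{N−1} with s = ∑_j η^a_j + ∑_j η^b_j. With L = N/2 + βN(N−1)/4 and r = √(2L), one has the identity M_r(N,η) · Γ(L + s/2) = L^{s/2} · Γ(L) · M(N,η). -/

import Mathlib

open MeasureTheory Real Filter Finset

/-- The weight `w(b) = ∏_{j=1}^{n} b_j^{jβ−1}` (here `j`-th coordinate is zero-indexed,
so the exponent is `(j+1)β − 1`). -/
noncomputable def wgt (β : ℝ) {n : ℕ} (b : Fin n → ℝ) : ℝ :=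
  ∏ j, b j ^ (((j : ℕ) : ℝ) * β + β - 1)

/-- `T(a,b) = ∑_j a_j² + 2 ∑_j b_j²`. -/
noncomputable def TT {N n : ℕ} (a : Fin N → ℝ) (b : Fin n → ℝ) : ℝ :=
  ∑ j, a j ^ 2 + 2 * ∑ j, b j ^ 2

/-- The β-Hermite matrix-entry moment `M(N,η)`. -/
noncomputable def Mom (β : ℝ) (N : ℕ) (ηa : Fin N → ℕ) (ηb : Fin (N - 1) → ℕ) : ℝ :=
  (∫ p in {p : (Fin N → ℝ) × (Fin (N - 1) → ℝ) | ∀ j, 0 < p.2 j},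
      (∏ j, p.1 j ^ ηa j) * (∏ j, p.2 j ^ ηb j) *
        Real.exp (-TT p.1 p.2 / 2) * wgt β p.2) /
  (∫ p in {p : (Fin N → ℝ) × (Fin (N - 1) → ℝ) | ∀ j, 0 < p.2 j},
      Real.exp (-TT p.1 p.2 / 2) * wgt β p.2)

/-- Surface integral over the sphere of radius `r` centered at `0` in the euclidean
space `ℝ^N × ℝ^{N−1} ≅ ℝ^{2N−1}`. -/
noncomputable def sphereIntegralS (N : ℕ) (r : ℝ)
    (f : EuclideanSpace ℝ (Fin N ⊕ Fin (N - 1)) → ℝ) : ℝ :=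
  r ^ (2 * N - 2) *
    ∫ ω, f (r • (ω : EuclideanSpace ℝ (Fin N ⊕ Fin (N - 1))))
      ∂((volume : Measure (EuclideanSpace ℝ (Fin N ⊕ Fin (N - 1)))).toSphere)

/-- The fixed trace matrix-entry moment `M_r(N,η)`, an integral over the portion
`S_r⁺` of the sphere of radius `r` where all `c_j > 0`, with `b_j = c_j/√2`. -/
noncomputable def MomFT (β : ℝ) (N : ℕ) (r : ℝ)
    (ηa : Fin N → ℕ) (ηb : Fin (N - 1) → ℕ) : ℝ :=
  (sphereIntegralS N r fun p =>
    Set.indicator {q : EuclideanSpace ℝ (Fin N ⊕ Fin (N - 1)) | ∀ j, 0 < q (Sum.inr j)}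
      (fun q =>
        (∏ j, q (Sum.inl j) ^ ηa j) * (∏ j, (q (Sum.inr j) / Real.sqrt 2) ^ ηb j) *
          wgt β (fun j => q (Sum.inr j) / Real.sqrt 2)) p) /
  (sphereIntegralS N r fun p =>
    Set.indicator {q : EuclideanSpace ℝ (Fin N ⊕ Fin (N - 1)) | ∀ j, 0 < q (Sum.inr j)}
      (fun q => wgt β (fun j => q (Sum.inr j) / Real.sqrt 2)) p)

/- ### Auxiliary material -/

section Auxiliary
open Set Metric

lemma rpow_sum' {κ : Type*} {t : ℝ} (ht : 0 < t) (s : Finset κ) (f : κ → ℝ) :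
    t ^ (∑ j ∈ s, f j) = ∏ j ∈ s, t ^ f j := by
  simp_rw [Real.rpow_def_of_pos ht, Finset.mul_sum, Real.exp_sum]

section Polar
variable {ι : Type*} [Fintype ι] [Nonempty ι]

local notation "E" => EuclideanSpace ℝ ι

lemma polar_aux (f : E → ℝ) (d : ℝ)
    (hf : ∀ (t : ℝ) (x : E), 0 < t → f (t • x) = t ^ d * f x) :
    ∫ x : E, f x * Real.exp (-‖x‖ ^ 2 / 2) =
      (∫ ω, f ω ∂((volume : Measure E).toSphere)) *
        ∫ r in Ioi (0 : ℝ),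
          r ^ ((Fintype.card ι - 1 : ℕ) : ℝ) * (r ^ d * Real.exp (-r ^ 2 / 2)) := by
  have hdim : Module.finrank ℝ E = Fintype.card ι := finrank_euclideanSpace
  have hcomp : ∀ x : ({(0 : E)}ᶜ : Set E),
      f x.1 * Real.exp (-‖x.1‖ ^ 2 / 2) =
        (fun p : sphere (0 : E) 1 × Ioi (0 : ℝ) =>
          f p.1.1 * (p.2.1 ^ d * Real.exp (-p.2.1 ^ 2 / 2)))
          (homeomorphUnitSphereProd E x) := by
    intro x
    have hx : x.1 ≠ 0 := x.2
    have hn : 0 < ‖x.1‖ := norm_pos_iff.2 hx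
    simp only [homeomorphUnitSphereProd_apply_fst_coe, homeomorphUnitSphereProd_apply_snd_coe]
    have h2 : f x.1 = ‖x.1‖ ^ d * f (‖x.1‖⁻¹ • x.1) := by
      rw [← hf _ _ hn, smul_inv_smul₀ hn.ne']
    rw [h2]; ring
  calc
    ∫ x : E, f x * Real.exp (-‖x‖ ^ 2 / 2)
        = ∫ x : ({(0 : E)}ᶜ : Set E), f x.1 * Real.exp (-‖x.1‖ ^ 2 / 2)
            ∂((volume : Measure E).comap (↑)) := by
          rw [MeasureTheory.integral_subtype_comap (measurableSet_singleton _).compl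
            fun x => f x * Real.exp (-‖x‖ ^ 2 / 2),
            MeasureTheory.restrict_compl_singleton]
    _ = ∫ p : sphere (0 : E) 1 × Ioi (0 : ℝ),
          f p.1.1 * (p.2.1 ^ d * Real.exp (-p.2.1 ^ 2 / 2))
          ∂((volume : Measure E).toSphere.prod
              (.volumeIoiPow (Module.finrank ℝ E - 1))) := by
          rw [← (volume : Measure E).measurePreserving_homeomorphUnitSphereProd.integral_comp
            (Homeomorph.measurableEmbedding _)]
          exact integral_congr_ae (Filter.Eventually.of_forall hcomp)
    _ = (∫ ω, f ω ∂((volume : Measure E).toSphere)) *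
          ∫ r : Ioi (0:ℝ), (r.1 ^ d * Real.exp (-r.1 ^ 2 / 2))
            ∂(.volumeIoiPow (Fintype.card ι - 1)) := by
          rw [hdim]
          exact integral_prod_mul (fun ω : sphere (0:E) 1 => f ω.1)
            (fun r : Ioi (0:ℝ) => r.1 ^ d * Real.exp (-r.1 ^ 2 / 2))
    _ = (∫ ω, f ω ∂((volume : Measure E).toSphere)) *
          ∫ r in Ioi (0 : ℝ),
            r ^ ((Fintype.card ι - 1 : ℕ) : ℝ) * (r ^ d * Real.exp (-r ^ 2 / 2)) := by
          congr 1
          simp only [Measure.volumeIoiPow, ENNReal.ofReal]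
          rw [integral_withDensity_eq_integral_smul
            ((measurable_subtype_coe.pow_const _).real_toNNReal) _,
            MeasureTheory.integral_subtype_comap measurableSet_Ioi
              (fun a : ℝ => (a ^ (Fintype.card ι - 1)).toNNReal •
                (a ^ d * Real.exp (-a ^ 2 / 2)))]
          refine setIntegral_congr_fun measurableSet_Ioi fun x hx => ?_
          rw [NNReal.smul_def, Real.coe_toNNReal _ (pow_nonneg hx.out.le _), smul_eq_mul,
            Real.rpow_natCast]
end Polar

section Fubini
variable {ι : Type*} [Fintype ι]

lemma euclid_pi (G : ι → ℝ → ℝ) :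
    ∫ x : EuclideanSpace ℝ ι, ∏ i, G i (x i) = ∏ i, ∫ t : ℝ, G i t := by
  rw [← MeasureTheory.integral_fintype_prod_volume_eq_prod (fun i (t : ℝ) => G i t),
    ← ((EuclideanSpace.volume_preserving_symm_measurableEquiv_toLp ι).symm).integral_comp']
  rfl
end Fubini

noncomputable def aF (k : ℕ) (t : ℝ) : ℝ := t ^ k * Real.exp (-t ^ 2 / 2)
noncomputable def bF (k : ℕ) (α t : ℝ) : ℝ :=
  if 0 < t then t ^ k * t ^ α * Real.exp (-t ^ 2) else 0
noncomputable def cF (k : ℕ) (α t : ℝ) : ℝ :=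
  if 0 < t then (t / Real.sqrt 2) ^ k * (t / Real.sqrt 2) ^ α * Real.exp (-t ^ 2 / 2) else 0

lemma cF_eq (k : ℕ) (α : ℝ) : cF k α = fun t => bF k α ((Real.sqrt 2)⁻¹ • t) := by
  funext t
  have h2 : (0:ℝ) < Real.sqrt 2 := by positivity
  have hu : (Real.sqrt 2)⁻¹ • t = t / Real.sqrt 2 := by
    rw [smul_eq_mul]; ring
  have hcond : (0 < t / Real.sqrt 2) ↔ 0 < t := div_pos_iff_of_pos_right h2
  have hsq : (t / Real.sqrt 2) ^ 2 = t ^ 2 / 2 := by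
    rw [div_pow, Real.sq_sqrt (by norm_num : (0:ℝ) ≤ 2)]
  simp only [cF, bF, hu, hcond, hsq, neg_div]

lemma integral_cF (k : ℕ) (α : ℝ) :
    ∫ t : ℝ, cF k α t = Real.sqrt 2 * ∫ t : ℝ, bF k α t := by
  have h2 : (0:ℝ) < Real.sqrt 2 := by positivity
  rw [cF_eq]
  rw [(volume : Measure ℝ).integral_comp_smul (bF k α) (Real.sqrt 2)⁻¹]
  simp [abs_of_pos h2, smul_eq_mul]

section General
variable {N₁ n₂ : ℕ} (ηa : Fin N₁ → ℕ) (ηb : Fin n₂ → ℕ) (αv : Fin n₂ → ℝ)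

local notation "E" => EuclideanSpace ℝ (Fin N₁ ⊕ Fin n₂)

noncomputable def FF (ηa : Fin N₁ → ℕ) (ηb : Fin n₂ → ℕ) (αv : Fin n₂ → ℝ) (x : E) : ℝ :=
  Set.indicator {q : E | ∀ j, 0 < q (Sum.inr j)}
    (fun q => (∏ j, q (Sum.inl j) ^ ηa j) * (∏ j, (q (Sum.inr j) / Real.sqrt 2) ^ ηb j) *
      ∏ j, (q (Sum.inr j) / Real.sqrt 2) ^ αv j) x

lemma homogFF (t : ℝ) (ht : 0 < t) (x : E) :
    FF ηa ηb αv (t • x) =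
      t ^ ((((∑ j, ηa j) + ∑ j, ηb j : ℕ) : ℝ) + ∑ j, αv j) * FF ηa ηb αv x := by
  have h2 : (0:ℝ) < Real.sqrt 2 := by positivity
  have hsmul : ∀ i, (t • x) i = t * x i := fun i => rfl
  have hmem : (t • x) ∈ {q : E | ∀ j, 0 < q (Sum.inr j)} ↔
      x ∈ {q : E | ∀ j, 0 < q (Sum.inr j)} := by
    simp only [Set.mem_setOf_eq, hsmul]
    exact forall_congr' fun j => ⟨fun h => by nlinarith, fun h => mul_pos ht h⟩
  by_cases hx : x ∈ {q : E | ∀ j, 0 < q (Sum.inr j)}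
  · rw [FF, FF, Set.indicator_of_mem (hmem.2 hx), Set.indicator_of_mem hx]
    simp only [hsmul]
    have e1 : ∏ j, (t * x (Sum.inl j)) ^ ηa j = t ^ (∑ j, ηa j) * ∏ j, x (Sum.inl j) ^ ηa j := by
      simp_rw [mul_pow]
      rw [Finset.prod_mul_distrib, Finset.prod_pow_eq_pow_sum]
    have e2 : ∏ j, (t * x (Sum.inr j) / Real.sqrt 2) ^ ηb j =
        t ^ (∑ j, ηb j) * ∏ j, (x (Sum.inr j) / Real.sqrt 2) ^ ηb j := by
      simp_rw [mul_div_assoc, mul_pow]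
      rw [Finset.prod_mul_distrib, Finset.prod_pow_eq_pow_sum]
    have e3 : ∏ j, (t * x (Sum.inr j) / Real.sqrt 2) ^ αv j =
        t ^ (∑ j, αv j) * ∏ j, (x (Sum.inr j) / Real.sqrt 2) ^ αv j := by
      rw [rpow_sum' ht, ← Finset.prod_mul_distrib]
      refine Finset.prod_congr rfl fun j _ => ?_
      rw [mul_div_assoc, Real.mul_rpow ht.le (div_pos (hx j) h2).le]
    rw [e1, e2, e3]
    rw [Real.rpow_add ht, Real.rpow_natCast, pow_add]
    ring
  · rw [FF, FF, Set.indicator_of_notMem (fun h => hx (hmem.1 h)), Set.indicator_of_notMem hx,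
      mul_zero]

lemma gauss_pointwise (x : E) :
    FF ηa ηb αv x * Real.exp (-‖x‖ ^ 2 / 2) =
      ∏ i, Sum.elim (fun j => aF (ηa j)) (fun j => cF (ηb j) (αv j)) i (x i) := by
  have hnorm : ‖x‖ ^ 2 = ∑ i, x i ^ 2 := by
    rw [EuclideanSpace.norm_eq, Real.sq_sqrt (by positivity)]
    simp [sq_abs]
  have hexp2 : Real.exp (-‖x‖ ^ 2 / 2) = ∏ i, Real.exp (-x i ^ 2 / 2) := by
    rw [← Real.exp_sum]
    congr 1
    rw [hnorm, ← Finset.sum_div, Finset.sum_neg_distrib]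
  by_cases hx : x ∈ {q : E | ∀ j, 0 < q (Sum.inr j)}
  · rw [FF, Set.indicator_of_mem hx, Fintype.prod_sum_type]
    simp only [Sum.elim_inl, Sum.elim_inr, aF]
    have hright : ∏ j, cF (ηb j) (αv j) (x (Sum.inr j)) =
        ∏ j, ((x (Sum.inr j) / Real.sqrt 2) ^ ηb j * (x (Sum.inr j) / Real.sqrt 2) ^ αv j *
          Real.exp (-x (Sum.inr j) ^ 2 / 2)) :=
      Finset.prod_congr rfl fun j _ => by rw [cF, if_pos (hx j)]
    rw [hright, hexp2, Fintype.prod_sum_type,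
      Finset.prod_mul_distrib, Finset.prod_mul_distrib, Finset.prod_mul_distrib]
    ring
  · rw [FF, Set.indicator_of_notMem hx, zero_mul]
    rw [Set.mem_setOf_eq] at hx
    push_neg at hx
    obtain ⟨j, hj⟩ := hx
    refine (Finset.prod_eq_zero (Finset.mem_univ (Sum.inr j)) ?_).symm
    simp only [Sum.elim_inr, cF, if_neg (not_lt.2 hj)]

lemma mom_pointwise (p : (Fin N₁ → ℝ) × (Fin n₂ → ℝ)) :
    Set.indicator {p : (Fin N₁ → ℝ) × (Fin n₂ → ℝ) | ∀ j, 0 < p.2 j}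
      (fun p => (∏ j, p.1 j ^ ηa j) * (∏ j, p.2 j ^ ηb j) *
        Real.exp (-TT p.1 p.2 / 2) * ∏ j, p.2 j ^ αv j) p =
      (∏ j, aF (ηa j) (p.1 j)) * ∏ j, bF (ηb j) (αv j) (p.2 j) := by
  have hexp2 : Real.exp (-TT p.1 p.2 / 2) =
      (∏ j, Real.exp (-p.1 j ^ 2 / 2)) * ∏ j, Real.exp (-p.2 j ^ 2) := by
    rw [← Real.exp_sum, ← Real.exp_sum, ← Real.exp_add]
    congr 1
    rw [← Finset.sum_div, Finset.sum_neg_distrib, Finset.sum_neg_distrib, TT]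
    ring
  by_cases hp : p ∈ {p : (Fin N₁ → ℝ) × (Fin n₂ → ℝ) | ∀ j, 0 < p.2 j}
  · rw [Set.indicator_of_mem hp]
    have hright : ∏ j, bF (ηb j) (αv j) (p.2 j) =
        ∏ j, (p.2 j ^ ηb j * p.2 j ^ αv j * Real.exp (-p.2 j ^ 2)) :=
      Finset.prod_congr rfl fun j _ => by rw [bF, if_pos (hp j)]
    simp only [aF]
    rw [hright, hexp2,
      Finset.prod_mul_distrib, Finset.prod_mul_distrib, Finset.prod_mul_distrib]
    ring
  · rw [Set.indicator_of_notMem hp]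
    rw [Set.mem_setOf_eq] at hp
    push_neg at hp
    obtain ⟨j, hj⟩ := hp
    refine ((mul_eq_zero.2 (Or.inr (Finset.prod_eq_zero (Finset.mem_univ j) ?_)))).symm
    simp only [bF, if_neg (not_lt.2 hj)]

lemma hS_meas : MeasurableSet {p : (Fin N₁ → ℝ) × (Fin n₂ → ℝ) | ∀ j, 0 < p.2 j} := by
  have h : {p : (Fin N₁ → ℝ) × (Fin n₂ → ℝ) | ∀ j, 0 < p.2 j} =
      ⋂ j, {p : (Fin N₁ → ℝ) × (Fin n₂ → ℝ) | 0 < p.2 j} := by ext; simp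
  rw [h]
  exact MeasurableSet.iInter fun j =>
    measurableSet_lt measurable_const (measurable_snd.eval)

lemma momP :
    ∫ p in {p : (Fin N₁ → ℝ) × (Fin n₂ → ℝ) | ∀ j, 0 < p.2 j},
        ((∏ j, p.1 j ^ ηa j) * (∏ j, p.2 j ^ ηb j) *
          Real.exp (-TT p.1 p.2 / 2) * ∏ j, p.2 j ^ αv j) =
      (∏ j, ∫ t : ℝ, aF (ηa j) t) * ∏ j, ∫ t : ℝ, bF (ηb j) (αv j) t := by
  rw [← integral_indicator hS_meas]
  calc
    ∫ p : (Fin N₁ → ℝ) × (Fin n₂ → ℝ),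
        Set.indicator {p : (Fin N₁ → ℝ) × (Fin n₂ → ℝ) | ∀ j, 0 < p.2 j}
          (fun p => (∏ j, p.1 j ^ ηa j) * (∏ j, p.2 j ^ ηb j) *
            Real.exp (-TT p.1 p.2 / 2) * ∏ j, p.2 j ^ αv j) p
        = ∫ p : (Fin N₁ → ℝ) × (Fin n₂ → ℝ),
            (∏ j, aF (ηa j) (p.1 j)) * ∏ j, bF (ηb j) (αv j) (p.2 j) :=
      integral_congr_ae (.of_forall (mom_pointwise ηa ηb αv))
    _ = (∫ a : Fin N₁ → ℝ, ∏ j, aF (ηa j) (a j)) *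
          ∫ b : Fin n₂ → ℝ, ∏ j, bF (ηb j) (αv j) (b j) := by
      rw [MeasureTheory.Measure.volume_eq_prod]
      exact integral_prod_mul (L := ℝ) (fun a : Fin N₁ → ℝ => ∏ j, aF (ηa j) (a j))
        (fun b : Fin n₂ → ℝ => ∏ j, bF (ηb j) (αv j) (b j))
    _ = _ := by
      rw [MeasureTheory.integral_fintype_prod_volume_eq_prod (f := fun j (t : ℝ) => aF (ηa j) t),
        MeasureTheory.integral_fintype_prod_volume_eq_prod (f := fun j (t : ℝ) => bF (ηb j) (αv j) t)]

lemma gaussFF :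
    ∫ x : E, FF ηa ηb αv x * Real.exp (-‖x‖ ^ 2 / 2) =
      (∏ j, ∫ t : ℝ, aF (ηa j) t) *
        (Real.sqrt 2 ^ n₂ * ∏ j, ∫ t : ℝ, bF (ηb j) (αv j) t) := by
  calc
    ∫ x : E, FF ηa ηb αv x * Real.exp (-‖x‖ ^ 2 / 2)
        = ∫ x : E, ∏ i, Sum.elim (fun j => aF (ηa j)) (fun j => cF (ηb j) (αv j)) i (x i) :=
      integral_congr_ae (.of_forall (gauss_pointwise ηa ηb αv))
    _ = ∏ i, ∫ t : ℝ, Sum.elim (fun j => aF (ηa j)) (fun j => cF (ηb j) (αv j)) i t :=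
      euclid_pi _
    _ = (∏ j, ∫ t : ℝ, aF (ηa j) t) * ∏ j, ∫ t : ℝ, cF (ηb j) (αv j) t := by
      rw [Fintype.prod_sum_type]
      simp only [Sum.elim_inl, Sum.elim_inr]
    _ = _ := by
      simp_rw [integral_cF]
      rw [Finset.prod_mul_distrib, Finset.prod_const, Finset.card_univ, Fintype.card_fin]

lemma gauss_polar (hN₁ : 0 < N₁) :
    ∫ x : E, FF ηa ηb αv x * Real.exp (-‖x‖ ^ 2 / 2) =
      (∫ ω, FF ηa ηb αv ω ∂((volume : Measure E).toSphere)) *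
        ∫ r in Ioi (0 : ℝ), r ^ ((N₁ + n₂ - 1 : ℕ) : ℝ) *
          (r ^ ((((∑ j, ηa j) + ∑ j, ηb j : ℕ) : ℝ) + ∑ j, αv j) * Real.exp (-r ^ 2 / 2)) := by
  haveI : Nonempty (Fin N₁ ⊕ Fin n₂) := ⟨Sum.inl ⟨0, hN₁⟩⟩
  have h := polar_aux (FF ηa ηb αv)
    ((((∑ j, ηa j) + ∑ j, ηb j : ℕ) : ℝ) + ∑ j, αv j)
    (fun t x ht => homogFF ηa ηb αv t ht x)
  simpa only [Fintype.card_sum, Fintype.card_fin] using h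

end General

lemma Jval {q u : ℝ} (hu : 0 < u) (hq : q + 1 = 2 * u) :
    ∫ r in Ioi (0 : ℝ), r ^ q * Real.exp (-r ^ 2 / 2) =
      (2 : ℝ) ^ (u - 1) * Real.Gamma u := by
  have hq' : -1 < q := by nlinarith
  have h := integral_rpow_mul_exp_neg_mul_rpow (p := 2) (q := q) (b := 1/2)
    (by norm_num) hq' (by norm_num)
  have hcong : ∫ r in Ioi (0 : ℝ), r ^ q * Real.exp (-r ^ 2 / 2) =
      ∫ x in Ioi (0 : ℝ), x ^ q * Real.exp (-(1/2) * x ^ (2:ℝ)) := by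
    refine setIntegral_congr_fun measurableSet_Ioi fun x hx => ?_
    rw [show (2:ℝ) = ((2:ℕ):ℝ) by norm_num, Real.rpow_natCast]
    ring_nf
  have h1 : (q + 1) / 2 = u := by linarith
  have h2 : (1/2 : ℝ) ^ (-(q + 1) / 2) * (1/2) = 2 ^ (u - 1) := by
    have e : -(q + 1) / 2 = -u := by linarith
    rw [e, one_div, Real.inv_rpow (by norm_num : (0:ℝ) ≤ 2),
      Real.rpow_neg (by norm_num : (0:ℝ) ≤ 2), inv_inv,
      Real.rpow_sub (by norm_num : (0:ℝ) < 2), Real.rpow_one]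
    ring
  rw [hcong, h, h1, h2]
end Auxiliary

/-- The exact identity `M_r(N,η)·Γ(L+s/2) = L^{s/2}·Γ(L)·M(N,η)` with
`L = N/2 + βN(N−1)/4` and `r = √(2L)`. -/
theorem moment_identity (β : ℝ) (hβ : 0 < β) (N : ℕ) (hN : 2 ≤ N)
    (ηa : Fin N → ℕ) (ηb : Fin (N - 1) → ℕ) (s : ℕ)
    (hs : s = ∑ j, ηa j + ∑ j, ηb j) (L : ℝ)
    (hL : L = (N : ℝ) / 2 + β * N * ((N : ℝ) - 1) / 4) :
    MomFT β N (Real.sqrt (2 * L)) ηa ηb * Real.Gamma (L + (s : ℝ) / 2) =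
      L ^ ((s : ℝ) / 2) * Real.Gamma L * Mom β N ηa ηb := by
  classical
  have hN1 : (1:ℕ) ≤ N := by omega
  have hL0 : 0 < L := by
    rw [hL]
    have h1 : 0 < (N:ℝ) := by positivity
    have h2 : (1:ℝ) ≤ (N:ℝ) := by exact_mod_cast hN1
    have h3 : (0:ℝ) ≤ β * (N:ℝ) * ((N:ℝ) - 1) / 4 := by
      have h4 : (0:ℝ) ≤ (N:ℝ) - 1 := by linarith
      positivity
    linarith
  set r : ℝ := Real.sqrt (2 * L) with hrdef
  have hr : 0 < r := Real.sqrt_pos.2 (by linarith)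
  -- abbreviations
  set dw : ℝ := ∑ j : Fin (N-1), (((j:ℕ):ℝ) * β + β - 1) with hdwdef
  set S₁ : ℝ := ∫ ω, FF ηa ηb (fun j => ((j:ℕ):ℝ) * β + β - 1) ω
    ∂((volume : Measure (EuclideanSpace ℝ (Fin N ⊕ Fin (N-1)))).toSphere) with hS₁def
  set S₂ : ℝ := ∫ ω, FF (fun _ : Fin N => 0) (fun _ : Fin (N-1) => 0)
      (fun j => ((j:ℕ):ℝ) * β + β - 1) ω
    ∂((volume : Measure (EuclideanSpace ℝ (Fin N ⊕ Fin (N-1)))).toSphere) with hS₂def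
  -- cast arithmetic
  have hmR : ((N - 1 : ℕ) : ℝ) = (N:ℝ) - 1 := by
    rw [Nat.cast_sub hN1, Nat.cast_one]
  have hcR : ((N + (N - 1) - 1 : ℕ) : ℝ) = 2*(N:ℝ) - 2 := by
    have h1 : N + (N - 1) - 1 = 2*N - 2 := by omega
    rw [h1, Nat.cast_sub (by omega : 2 ≤ 2*N)]
    push_cast; ring
  have key : ∀ n : ℕ, (∑ i ∈ Finset.range n, (i:ℝ)) = (n:ℝ)*((n:ℝ)-1)/2 := by
    intro n
    induction n with
    | zero => simp
    | succ k ih =>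
      rw [Finset.sum_range_succ, ih]
      push_cast [Nat.cast_succ]
      ring
  have hdw : dw = β * ((N:ℝ) - 1) * (N:ℝ) / 2 - ((N:ℝ) - 1) := by
    rw [hdwdef]
    have hre : ∀ j : Fin (N-1), ((j:ℕ):ℝ) * β + β - 1 = ((j:ℕ):ℝ) * β + (β - 1) := by
      intro j; ring
    simp_rw [hre]
    rw [Finset.sum_add_distrib, ← Finset.sum_mul, Fin.sum_univ_eq_sum_range (fun i => (i:ℝ)) (N-1),
      key, Finset.sum_const, Finset.card_univ, Fintype.card_fin, nsmul_eq_mul, hmR]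
    ring
  have hq2 : ((N + (N - 1) - 1 : ℕ) : ℝ) + dw + 1 = 2 * L := by
    rw [hcR, hdw, hL]; ring
  have hq1 : ((N + (N - 1) - 1 : ℕ) : ℝ) + (((s:ℕ):ℝ) + dw) + 1 = 2 * (L + (s:ℝ)/2) := by
    rw [hcR] at hq2 ⊢; push_cast; linarith
  -- the J-integrals
  have hJ2 : ∫ x in Set.Ioi (0:ℝ),
      x ^ (((N + (N - 1) - 1 : ℕ) : ℝ) + dw) * Real.exp (-x ^ 2 / 2) =
      (2:ℝ) ^ (L - 1) * Real.Gamma L := Jval hL0 hq2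
  have hJ1 : ∫ x in Set.Ioi (0:ℝ),
      x ^ (((N + (N - 1) - 1 : ℕ) : ℝ) + (((s:ℕ):ℝ) + dw)) * Real.exp (-x ^ 2 / 2) =
      (2:ℝ) ^ (L + (s:ℝ)/2 - 1) * Real.Gamma (L + (s:ℝ)/2) :=
    Jval (by positivity) hq1
  -- raw radial integrals from gauss_polar
  have hJcong : ∀ d : ℝ, ∫ x in Set.Ioi (0:ℝ),
      x ^ (((N + (N - 1) - 1 : ℕ) : ℝ)) * (x ^ d * Real.exp (-x ^ 2 / 2)) =
      ∫ x in Set.Ioi (0:ℝ),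
        x ^ (((N + (N - 1) - 1 : ℕ) : ℝ) + d) * Real.exp (-x ^ 2 / 2) := by
    intro d
    refine setIntegral_congr_fun measurableSet_Ioi fun x hx => ?_
    rw [← mul_assoc, ← Real.rpow_add (Set.mem_Ioi.1 hx)]
  -- Gaussian identities
  have hGnum := (gaussFF ηa ηb (fun j => ((j:ℕ):ℝ) * β + β - 1)).symm.trans
    (gauss_polar ηa ηb (fun j => ((j:ℕ):ℝ) * β + β - 1) (by omega))
  have hGden := (gaussFF (fun _ : Fin N => 0) (fun _ : Fin (N-1) => 0)
      (fun j => ((j:ℕ):ℝ) * β + β - 1)).symm.trans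
    (gauss_polar (fun _ : Fin N => 0) (fun _ : Fin (N-1) => 0)
      (fun j => ((j:ℕ):ℝ) * β + β - 1) (by omega))
  -- moment integrals
  have hnum := momP ηa ηb (fun j => ((j:ℕ):ℝ) * β + β - 1)
  have hden := momP (fun _ : Fin N => 0) (fun _ : Fin (N-1) => 0)
    (fun j => ((j:ℕ):ℝ) * β + β - 1)
  simp only [pow_zero, Finset.prod_const_one, one_mul, Finset.sum_const_zero,
    Nat.cast_zero, zero_add, add_zero] at hden hGden
  rw [← hs] at hGnum
  rw [← hdwdef] at hGnum hGden
  -- Gaussian identities with Gamma values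
  have hA : Real.sqrt 2 ^ (N-1) *
      ((∏ j, ∫ t : ℝ, aF (ηa j) t) *
        ∏ j, ∫ t : ℝ, bF (ηb j) (((j:ℕ):ℝ) * β + β - 1) t) =
      S₁ * ((2:ℝ) ^ (L + (s:ℝ)/2 - 1) * Real.Gamma (L + (s:ℝ)/2)) := by
    rw [show Real.sqrt 2 ^ (N-1) *
        ((∏ j, ∫ t : ℝ, aF (ηa j) t) *
          ∏ j, ∫ t : ℝ, bF (ηb j) (((j:ℕ):ℝ) * β + β - 1) t) =
        (∏ j, ∫ t : ℝ, aF (ηa j) t) *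
          (Real.sqrt 2 ^ (N-1) * ∏ j, ∫ t : ℝ, bF (ηb j) (((j:ℕ):ℝ) * β + β - 1) t) by ring,
      hGnum, hJcong ((s:ℝ) + dw), hJ1]
  have hB : Real.sqrt 2 ^ (N-1) *
      ((∏ j : Fin N, ∫ t : ℝ, aF 0 t) *
        ∏ j : Fin (N-1), ∫ t : ℝ, bF 0 (((j:ℕ):ℝ) * β + β - 1) t) =
      S₂ * ((2:ℝ) ^ (L - 1) * Real.Gamma L) := by
    rw [show Real.sqrt 2 ^ (N-1) *
        ((∏ j : Fin N, ∫ t : ℝ, aF 0 t) *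
          ∏ j : Fin (N-1), ∫ t : ℝ, bF 0 (((j:ℕ):ℝ) * β + β - 1) t) =
        (∏ j : Fin N, ∫ t : ℝ, aF 0 t) *
          (Real.sqrt 2 ^ (N-1) * ∏ j : Fin (N-1), ∫ t : ℝ, bF 0 (((j:ℕ):ℝ) * β + β - 1) t) by ring,
      hGden, hJcong dw, hJ2]
  have hs2 : (Real.sqrt 2 : ℝ) ^ (N-1) ≠ 0 := by positivity
  -- value of Mom
  have hMom : Mom β N ηa ηb = (S₁ / S₂) *
      (((2:ℝ) ^ (L + (s:ℝ)/2 - 1) * Real.Gamma (L + (s:ℝ)/2)) /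
        ((2:ℝ) ^ (L - 1) * Real.Gamma L)) := by
    unfold Mom
    simp only [wgt]
    rw [hnum, hden, ← mul_div_mul_left _ _ hs2, hA, hB, mul_div_mul_comm]
  -- value of MomFT
  have hw₁ : ∀ ω : Metric.sphere (0 : EuclideanSpace ℝ (Fin N ⊕ Fin (N-1))) 1,
      FF ηa ηb (fun j => ((j:ℕ):ℝ) * β + β - 1) (r • (ω : EuclideanSpace ℝ (Fin N ⊕ Fin (N-1)))) =
        r ^ ((s:ℝ) + dw) * FF ηa ηb (fun j => ((j:ℕ):ℝ) * β + β - 1) ω := by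
    intro ω
    have h := homogFF ηa ηb (fun j => ((j:ℕ):ℝ) * β + β - 1) r hr
      (ω : EuclideanSpace ℝ (Fin N ⊕ Fin (N-1)))
    rwa [← hs, ← hdwdef] at h
  have hw₂ : ∀ ω : Metric.sphere (0 : EuclideanSpace ℝ (Fin N ⊕ Fin (N-1))) 1,
      FF (fun _ : Fin N => 0) (fun _ : Fin (N-1) => 0) (fun j => ((j:ℕ):ℝ) * β + β - 1)
          (r • (ω : EuclideanSpace ℝ (Fin N ⊕ Fin (N-1)))) =
        r ^ dw * FF (fun _ : Fin N => 0) (fun _ : Fin (N-1) => 0)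
          (fun j => ((j:ℕ):ℝ) * β + β - 1) ω := by
    intro ω
    have h := homogFF (fun _ : Fin N => 0) (fun _ : Fin (N-1) => 0)
      (fun j => ((j:ℕ):ℝ) * β + β - 1) r hr (ω : EuclideanSpace ℝ (Fin N ⊕ Fin (N-1)))
    simpa only [Finset.sum_const_zero, Nat.cast_zero, zero_add, ← hdwdef] using h
  have hrp : (r:ℝ) ^ (2*N-2) ≠ 0 := pow_ne_zero _ hr.ne'
  have hrd : r ^ dw ≠ 0 := (Real.rpow_pos_of_pos hr dw).ne'
  have hw₁' : ∀ ω : Metric.sphere (0 : EuclideanSpace ℝ (Fin N ⊕ Fin (N-1))) 1,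
      Set.indicator {q : EuclideanSpace ℝ (Fin N ⊕ Fin (N-1)) | ∀ j, 0 < q (Sum.inr j)}
        (fun q => ((∏ j, q (Sum.inl j) ^ ηa j) *
            ∏ j, (q (Sum.inr j) / Real.sqrt 2) ^ ηb j) *
          ∏ j, (q (Sum.inr j) / Real.sqrt 2) ^ (((j:ℕ):ℝ) * β + β - 1))
        (r • (ω : EuclideanSpace ℝ (Fin N ⊕ Fin (N-1)))) =
      r ^ ((s:ℝ) + dw) * FF ηa ηb (fun j => ((j:ℕ):ℝ) * β + β - 1) ω := fun ω => hw₁ ω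
  have hw₂' : ∀ ω : Metric.sphere (0 : EuclideanSpace ℝ (Fin N ⊕ Fin (N-1))) 1,
      Set.indicator {q : EuclideanSpace ℝ (Fin N ⊕ Fin (N-1)) | ∀ j, 0 < q (Sum.inr j)}
        (fun q => ∏ j, (q (Sum.inr j) / Real.sqrt 2) ^ (((j:ℕ):ℝ) * β + β - 1))
        (r • (ω : EuclideanSpace ℝ (Fin N ⊕ Fin (N-1)))) =
      r ^ dw * FF (fun _ : Fin N => 0) (fun _ : Fin (N-1) => 0)
        (fun j => ((j:ℕ):ℝ) * β + β - 1) ω := by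
    have hFFden : ∀ x : EuclideanSpace ℝ (Fin N ⊕ Fin (N-1)),
        FF (fun _ : Fin N => 0) (fun _ : Fin (N-1) => 0)
          (fun j => ((j:ℕ):ℝ) * β + β - 1) x =
        Set.indicator {q : EuclideanSpace ℝ (Fin N ⊕ Fin (N-1)) | ∀ j, 0 < q (Sum.inr j)}
          (fun q => ∏ j, (q (Sum.inr j) / Real.sqrt 2) ^ (((j:ℕ):ℝ) * β + β - 1)) x := by
      intro x
      rw [FF]
      simp only [pow_zero, Finset.prod_const_one, one_mul]
    intro ω
    rw [← hFFden (r • (ω : EuclideanSpace ℝ (Fin N ⊕ Fin (N-1))))]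
    exact hw₂ ω
  have hMomFT : MomFT β N r ηa ηb = r ^ ((s:ℝ)) * (S₁ / S₂) := by
    unfold MomFT sphereIntegralS
    simp only [wgt]
    rw [integral_congr_ae (Filter.Eventually.of_forall hw₁'),
      integral_congr_ae (Filter.Eventually.of_forall hw₂'),
      MeasureTheory.integral_const_mul, MeasureTheory.integral_const_mul]
    rw [← hS₁def, ← hS₂def, mul_div_mul_left _ _ hrp, Real.rpow_add hr, mul_assoc,
      mul_div_assoc, mul_div_mul_left _ _ hrd]
  -- final arithmetic
  have hrs : r ^ ((s:ℝ)) = 2 ^ ((s:ℝ)/2) * L ^ ((s:ℝ)/2) := by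
    rw [hrdef, Real.sqrt_eq_rpow,
      ← Real.rpow_mul (show (0:ℝ) ≤ 2*L by linarith),
      show (1:ℝ)/2 * (s:ℝ) = (s:ℝ)/2 by ring,
      Real.mul_rpow (by norm_num) hL0.le]
  have hγ : Real.Gamma L ≠ 0 := (Real.Gamma_pos_of_pos hL0).ne'
  have h2L : (2:ℝ) ^ (L - 1) ≠ 0 := (Real.rpow_pos_of_pos two_pos (L-1)).ne'
  have h2s : (2:ℝ) ^ (L + (s:ℝ)/2 - 1) = 2 ^ ((s:ℝ)/2) * 2 ^ (L - 1) := by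
    rw [← Real.rpow_add (by norm_num : (0:ℝ) < 2)]
    ring_nf
  have hsmall : ∀ (P X g : ℝ), g ≠ 0 → g * (P * (X / g)) = P * X := by
    intro P X g hg
    rw [mul_comm g, mul_assoc, div_mul_cancel₀ _ hg]
  rw [hMomFT, hMom, hrs, h2s,
    show (2:ℝ) ^ ((s:ℝ)/2) * 2 ^ (L-1) * Real.Gamma (L + (s:ℝ)/2) =
      2 ^ (L-1) * (2 ^ ((s:ℝ)/2) * Real.Gamma (L + (s:ℝ)/2)) by ring,
    mul_div_mul_left _ _ h2L, mul_assoc (L ^ ((s:ℝ)/2)),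
    hsmall (S₁ / S₂) (2 ^ ((s:ℝ)/2) * Real.Gamma (L + (s:ℝ)/2)) (Real.Gamma L) hγ]
  ring
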